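/- Let a < b be reals and α, β ∈ ℝ such that λ² + αλ + β = 0 has two distinct positive real roots. Then for every continuous f : [a,b] → ℝ, every ε > 0, and every twice continuously differentiable y : [a,b] → ℝ with |y''(t) + α y'(t) + β y(t) − f(t)| ≤ ε for all t ∈ [a,b], there exists K > 0 (independent of y, f, ε) and a twice continuously differentiable u : [a,b] → ℝ with u''(t) + α u'(t) + β u(t) = f(t) on [a,b] and |y(t) − u(t)| ≤ K ε on [a,b]. -/

import Mathlib

open Set intervalIntegral

lemma aux_ode (lam b ε : ℝ) (hlam : 0 < lam) (e : ℝ → ℝ) (he : Continuous e)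
    (hbd : ∀ t ≤ b, |e t| ≤ ε) :
    ∃ z : ℝ → ℝ, Continuous z ∧ (∀ t, HasDerivAt z (lam * z t + e t) t) ∧
      ∀ t ≤ b, |z t| ≤ ε / lam := by
  have hε : 0 ≤ ε := le_trans (abs_nonneg _) (hbd b le_rfl)
  set g : ℝ → ℝ := fun s => Real.exp (-(lam * s)) * e s with hg
  have hgc : Continuous g := by continuity
  set F : ℝ → ℝ := fun t => ∫ s in b..t, g s with hF
  have hFd : ∀ t, HasDerivAt F (g t) t := fun t =>
    intervalIntegral.integral_hasDerivAt_right (hgc.intervalIntegrable _ _)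
      (hgc.stronglyMeasurable.stronglyMeasurableAtFilter) hgc.continuousAt
  have hFc : Continuous F := by
    rw [continuous_iff_continuousAt]; exact fun t => (hFd t).continuousAt
  refine ⟨fun t => Real.exp (lam * t) * F t, by continuity, ?_, ?_⟩
  · intro t
    have h1 : HasDerivAt (fun t => Real.exp (lam * t)) (lam * Real.exp (lam * t)) t := by
      exact ((Real.hasDerivAt_exp (lam * t)).comp t
        ((hasDerivAt_id t).const_mul lam)).congr_deriv (by ring)
    have := h1.mul (hFd t)
    have hexp : Real.exp (lam * t) * g t = e t := by
      simp only [hg]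
      rw [← mul_assoc, ← Real.exp_add, add_neg_cancel, Real.exp_zero, one_mul]
    convert this using 1
    · rfl
    · rfl
    · rfl
    rw [hexp]; ring
  · intro t ht
    have hFs : F t = -∫ s in t..b, g s := intervalIntegral.integral_symm _ _
    have hint1 : IntervalIntegrable (fun s => |g s|) MeasureTheory.volume t b :=
      (hgc.abs).intervalIntegrable _ _
    have hint2 : IntervalIntegrable (fun s => ε * Real.exp (-(lam * s)))
        MeasureTheory.volume t b := by
      apply Continuous.intervalIntegrable; continuity
    have hmono : ∫ s in t..b, |g s| ≤ ∫ s in t..b, ε * Real.exp (-(lam * s)) := by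
      apply intervalIntegral.integral_mono_on ht hint1 hint2
      intro s hs
      have : |g s| = Real.exp (-(lam * s)) * |e s| := by
        simp [hg, abs_mul, abs_of_pos (Real.exp_pos _)]
      rw [this, mul_comm]
      exact mul_le_mul_of_nonneg_right (hbd s hs.2) (Real.exp_pos _).le
    have hcomp : ∫ s in t..b, ε * Real.exp (-(lam * s))
        = (ε / lam) * Real.exp (-(lam * t)) - (ε / lam) * Real.exp (-(lam * b)) := by
      have : ∀ s ∈ uIcc t b, HasDerivAt (fun s => -(ε / lam) * Real.exp (-(lam * s)))
          (ε * Real.exp (-(lam * s))) s := by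
        intro s _
        have h2 : HasDerivAt (fun s => Real.exp (-(lam * s)))
            (-lam * Real.exp (-(lam * s))) s := by
          exact ((Real.hasDerivAt_exp (-(lam * s))).comp s
            (((hasDerivAt_id s).const_mul lam).neg)).congr_deriv
            (by ring : _ = -lam * Real.exp (-(lam * s)))
        have := h2.const_mul (-(ε / lam))
        convert this using 1
        · rfl
        · rfl
        field_simp
      rw [intervalIntegral.integral_eq_sub_of_hasDerivAt this hint2]
      ring
    have hnorm : |∫ s in t..b, g s| ≤ ∫ s in t..b, |g s| := by
      simpa [Real.norm_eq_abs] using intervalIntegral.norm_integral_le_integral_norm (f := g) ht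
    have hbound : |F t| ≤ (ε / lam) * Real.exp (-(lam * t)) - (ε / lam) * Real.exp (-(lam * b)) := by
      rw [hFs, abs_neg]
      exact le_trans hnorm (le_trans hmono hcomp.le)
    have h3 : |Real.exp (lam * t) * F t| = Real.exp (lam * t) * |F t| := by
      rw [abs_mul, abs_of_pos (Real.exp_pos _)]
    rw [h3]
    have hee : Real.exp (lam * t) * Real.exp (-(lam * t)) = 1 := by
      rw [← Real.exp_add, add_neg_cancel, Real.exp_zero]
    have h4 : Real.exp (lam * t) * |F t| ≤ ε / lam
        - (ε / lam) * (Real.exp (lam * t) * Real.exp (-(lam * b))) := by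
      have h6 := mul_le_mul_of_nonneg_left hbound (Real.exp_pos (lam * t)).le
      have hr : Real.exp (lam * t) * ((ε / lam) * Real.exp (-(lam * t))
          - (ε / lam) * Real.exp (-(lam * b)))
          = ε / lam - (ε / lam) * (Real.exp (lam * t) * Real.exp (-(lam * b))) := by
        linear_combination (ε / lam) * hee
      linarith
    have h5 : 0 ≤ (ε / lam) * (Real.exp (lam * t) * Real.exp (-(lam * b))) := by
      positivity
    linarith

theorem stmt_10 (a b α β l1 l2 : ℝ) (hab : a < b)
    (h1 : 0 < l1) (h2 : 0 < l2) (hne : l1 ≠ l2)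
    (hchar : ∀ l : ℝ, l ^ 2 + α * l + β = (l - l1) * (l - l2)) :
    ∃ K > 0, ∀ f : ℝ → ℝ, ContinuousOn f (Icc a b) →
      ∀ ε > 0, ∀ y y' y'' : ℝ → ℝ,
      (∀ t ∈ Icc a b, HasDerivAt y (y' t) t) →
      (∀ t ∈ Icc a b, HasDerivAt y' (y'' t) t) →
      ContinuousOn y'' (Icc a b) →
      (∀ t ∈ Icc a b, |y'' t + α * y' t + β * y t - f t| ≤ ε) →
      ∃ u u' u'' : ℝ → ℝ,
        (∀ t ∈ Icc a b, HasDerivAt u (u' t) t) ∧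
        (∀ t ∈ Icc a b, HasDerivAt u' (u'' t) t) ∧
        ContinuousOn u'' (Icc a b) ∧
        (∀ t ∈ Icc a b, u'' t + α * u' t + β * u t = f t) ∧
        (∀ t ∈ Icc a b, |y t - u t| ≤ K * ε) := by
  have hα : α = -(l1 + l2) := by have h0 := hchar 0; have hc1 := hchar 1; nlinarith
  have hβ : β = l1 * l2 := by have h0 := hchar 0; nlinarith
  refine ⟨1 / (l1 * l2), by positivity, ?_⟩
  intro f hf ε hε y y' y'' hy hy' hy'' hyb
  set g : ℝ → ℝ := fun t => y'' t + α * y' t + β * y t - f t with hgdef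
  have hyc : ContinuousOn y (Icc a b) := fun t ht => ((hy t ht).continuousAt).continuousWithinAt
  have hy'c : ContinuousOn y' (Icc a b) := fun t ht => ((hy' t ht).continuousAt).continuousWithinAt
  have hgc : ContinuousOn g (Icc a b) := by
    apply ContinuousOn.sub _ hf
    exact (hy''.add ((continuousOn_const.mul hy'c))).add ((continuousOn_const.mul hyc))
  set e : ℝ → ℝ := IccExtend hab.le ((Icc a b).restrict g) with hedef
  have hec : Continuous e := (continuousOn_iff_continuous_restrict.mp hgc).Icc_extend'
  have hebd : ∀ t, |e t| ≤ ε := by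
    intro t
    have : e t = g (projIcc a b hab.le t) := rfl
    rw [this]
    exact hyb _ (projIcc a b hab.le t).2
  have heeq : ∀ t ∈ Icc a b, e t = g t := fun t ht => by
    simp [hedef, IccExtend_of_mem hab.le _ ht, restrict]
  obtain ⟨w, hwc, hwd, hwb⟩ := aux_ode l1 b ε h1 e hec (fun t _ => hebd t)
  obtain ⟨z, hzc, hzd, hzb⟩ := aux_ode l2 b (ε / l1) h2 w hwc hwb
  refine ⟨fun t => y t - z t, fun t => y' t - (l2 * z t + w t),
    fun t => y'' t - (l2 * (l2 * z t + w t) + (l1 * w t + e t)), ?_, ?_, ?_, ?_, ?_⟩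
  · exact fun t ht => (hy t ht).sub (hzd t)
  · intro t ht
    exact (hy' t ht).sub (((hzd t).const_mul l2).add (hwd t))
  · apply hy''.sub
    apply Continuous.continuousOn
    continuity
  · intro t ht
    have hE : e t = y'' t + α * y' t + β * y t - f t := heeq t ht
    linear_combination -hE - (l2 * z t + w t) * hα - z t * hβ
  · intro t ht
    have := hzb t ht.2
    have heq : ε / l1 / l2 = 1 / (l1 * l2) * ε := by field_simp
    simpa [heq] using this
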